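/- (Generating function for Euler characteristics of symmetric products, algebraic form) For every commutative ℚ-algebra R, every c ∈ R, and every n ≥ 0: (1/n!) · ∑_{σ ∈ Equiv.Perm (Fin n)} c^{(number of orbits of σ on Fin n)} equals the coefficient of t^n in the binomial expansion of (1 − t)^{−c}, namely (1/n!) · c·(c+1)·…·(c+n−1) (the rising factorial divided by n!). Equivalently, ∑_{n ≥ 0} t^n · (1/n!) · ∑_{σ ∈ Equiv.Perm (Fin n)} c^{#orbits(σ)} = exp( ∑_{r ≥ 1} (c/r) t^r ) in R⟦t⟧. (Applied with c = χ(X), this is the formula ∑_n q^n χ(SP^n(X)) = (1−q)^{−χ(X)}.) -/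

import Mathlib

/-- The number of orbits of a permutation of `Fin n`, counting all cycles and all
fixed points. -/
def numOrbits {n : ℕ} (σ : Equiv.Perm (Fin n)) : ℕ :=
  σ.cycleType.card + (n - σ.cycleType.sum)

/-- Substitution of a power series `S` (with zero constant coefficient) into the
exponential series `∑ₖ tᵏ/k!`: the `n`-th coefficient of `exp(S)` is
`∑_{k ≤ n} (1/k!) · coeff n (S^k)` (the sum truncates since `S^k` has order `≥ k`). -/
noncomputable def expSubst {R : Type*} [CommRing R] [Algebra ℚ R]
    (S : PowerSeries R) : PowerSeries R :=
  PowerSeries.mk fun n => ∑ k ∈ Finset.range (n + 1),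
    PowerSeries.coeff k (PowerSeries.exp ℚ) • PowerSeries.coeff n (S ^ k)

section Combinatorics

open Equiv Equiv.Perm Finset List

variable {α : Type*} [Fintype α] [DecidableEq α]

lemma myCycleType_formPerm {l : List α} (hl : l.Nodup) (hn : 2 ≤ l.length) :
    (List.formPerm l).cycleType = {l.length} := by
  have hne : ∀ x : α, l ≠ [x] := by
    intro x hx
    rw [hx] at hn; simp at hn
  rw [(List.isCycle_formPerm hl hn).cycleType,
    List.support_formPerm_of_nodup l hl hne, List.card_toFinset,
    List.dedup_eq_self.mpr hl]

lemma case2 (g : Perm α) {a b : α} (hab : a ≠ b) (hb : g b = b) (ha : g a ≠ a) :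
    (Equiv.swap a b * g).cycleType.card = g.cycleType.card ∧
    (Equiv.swap a b * g).cycleType.sum = g.cycleType.sum + 1 := by
  classical
  set c := g.cycleOf a with hc_def
  have hc : c.IsCycle := isCycle_cycleOf g ha
  have hmem : c ∈ g.cycleFactorsFinset := cycleOf_mem_cycleFactorsFinset_iff.mpr (mem_support.2 ha)
  have hd : Equiv.Perm.Disjoint (g * c⁻¹) c := disjoint_mul_inv_of_mem_cycleFactorsFinset hmem
  set h := g * c⁻¹ with hh_def
  have hcb : c b = b := by
    rw [hc_def, cycleOf_apply]
    split <;> simp [hb]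
  have hhb : h b = b := by
    have : c⁻¹ b = b := by
      rw [Equiv.Perm.inv_eq_iff_eq]; exact hcb.symm
    rw [hh_def, Equiv.Perm.mul_apply, this, hb]
  have hca : c a = g a := cycleOf_apply_self g a
  have hha : h a = a := by
    rcases hd a with h1 | h2
    · exact h1
    · rw [hca] at h2; exact absurd h2 ha
  -- toList
  have haS : a ∈ g.support := mem_support.2 ha
  have h2 : 2 ≤ (g.toList a).length := two_le_length_toList_iff_mem_support.mpr haS
  have hnd : (g.toList a).Nodup := nodup_toList g a
  have hbl : b ∉ g.toList a := by
    intro hbmem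
    rw [mem_toList_iff] at hbmem
    have := hbmem.1.mem_support_iff.mp haS
    exact (mem_support.1 this) hb
  have hform : (g.toList a).formPerm = c := formPerm_toList g a
  obtain ⟨t, hyt⟩ : ∃ t, g.toList a = a :: t := by
    have hne : g.toList a ≠ [] := by
      intro hnil; rw [hnil] at h2; simp at h2
    obtain ⟨y, t, hL⟩ := List.exists_cons_of_ne_nil hne
    have hy : y = a := by
      have h0 := toList_getElem_zero (p := g) (x := a) haS
      simp only [hL, List.getElem_cons_zero] at h0
      exact h0
    exact ⟨t, by rw [hL, hy]⟩
  -- swap a b * c = formPerm (b :: a :: t)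
  have hcons : Equiv.swap a b * c = (b :: a :: t).formPerm := by
    rw [List.formPerm_cons_cons, ← hform, hyt, Equiv.swap_comm]
  have hnd2 : (b :: a :: t).Nodup := by
    rw [List.nodup_cons]
    refine ⟨by rw [← hyt]; exact hbl, by rw [← hyt]; exact hnd⟩
  have hlen : (a :: t).length = t.length + 1 := by simp
  have hct : c.cycleType = {t.length + 1} := by
    rw [← hform, hyt, myCycleType_formPerm (by rw [← hyt]; exact hnd) (by rw [← hyt]; exact h2), hlen]
  have hct2 : (Equiv.swap a b * c).cycleType = {t.length + 2} := by
    rw [hcons, myCycleType_formPerm hnd2 (by simp)]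
    simp
  -- disjointness of h with swap a b * c
  have hdisj2 : Equiv.Perm.Disjoint h (Equiv.swap a b * c) := by
    intro x
    by_cases hx : h x = x
    · left; exact hx
    · right
      have hcx : c x = x := (hd x).resolve_left hx
      have hxa : x ≠ a := fun e => hx (e ▸ hha)
      have hxb : x ≠ b := fun e => hx (e ▸ hhb)
      simp [hcx, Equiv.swap_apply_of_ne_of_ne hxa hxb]
  have hgdecomp : Equiv.swap a b * g = h * (Equiv.swap a b * c) := by
    have hcomm : Commute (Equiv.swap a b) h := by
      apply Equiv.Perm.Disjoint.commute
      intro x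
      by_cases hxa : x = a
      · right; rw [hxa, hha]
      by_cases hxb : x = b
      · right; rw [hxb, hhb]
      · left; exact Equiv.swap_apply_of_ne_of_ne hxa hxb
    calc Equiv.swap a b * g = (Equiv.swap a b * h) * c := by rw [hh_def]; group
    _ = (h * Equiv.swap a b) * c := by rw [hcomm.eq]
    _ = h * (Equiv.swap a b * c) := by rw [mul_assoc]
  have hdisj3 : Equiv.Perm.Disjoint h c := by
    intro x; exact (hd x).imp id id
  have hgct : g.cycleType = h.cycleType + c.cycleType := by
    have : g = h * c := by rw [hh_def]; group
    rw [this, hdisj3.cycleType_mul]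
  have hsct : (Equiv.swap a b * g).cycleType = h.cycleType + (Equiv.swap a b * c).cycleType := by
    rw [hgdecomp, hdisj2.cycleType_mul]
  constructor
  · rw [hsct, hgct, hct, hct2]; simp
  · rw [hsct, hgct, hct, hct2]; simp; ring


lemma key (g : Perm α) {a b : α} (hab : a ≠ b) (hb : g b = b) :
    (Equiv.swap a b * g).cycleType.card
      + (Fintype.card α - (Equiv.swap a b * g).cycleType.sum) + 1
    = g.cycleType.card + (Fintype.card α - g.cycleType.sum) := by
  have hsum : g.cycleType.sum = g.support.card := g.sum_cycleType
  have hsum2 : (Equiv.swap a b * g).cycleType.sum = (Equiv.swap a b * g).support.card :=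
    (Equiv.swap a b * g).sum_cycleType
  have hle : g.support.card ≤ Fintype.card α := Finset.card_le_univ _
  have hle2 : (Equiv.swap a b * g).support.card ≤ Fintype.card α := Finset.card_le_univ _
  by_cases ha : g a = a
  · -- disjoint case
    have hd : Equiv.Perm.Disjoint (Equiv.swap a b) g := by
      intro x
      by_cases hxa : x = a
      · right; rw [hxa, ha]
      by_cases hxb : x = b
      · right; rw [hxb, hb]
      · left; exact Equiv.swap_apply_of_ne_of_ne hxa hxb
    have hct : (Equiv.swap a b * g).cycleType = 2 ::ₘ g.cycleType := by
      rw [hd.cycleType_mul, (isCycle_swap hab).cycleType, card_support_swap hab]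
      rfl
    have h1 : (Equiv.swap a b * g).cycleType.card = g.cycleType.card + 1 := by
      rw [hct]; simp
    have h2 : (Equiv.swap a b * g).cycleType.sum = g.cycleType.sum + 2 := by
      rw [hct]; simp [Multiset.sum_cons]; ring
    omega
  · obtain ⟨h1, h2⟩ := case2 g hab hb ha
    omega



/-- `Fin n ≃ {x : Fin (n+1) // x ≠ 0}` via `succ`. -/
def finSuccNeZeroEquiv (n : ℕ) : Fin n ≃ {x : Fin (n + 1) // x ≠ 0} where
  toFun i := ⟨i.succ, Fin.succ_ne_zero i⟩
  invFun x := (x.1).pred x.2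
  left_inv i := by simp
  right_inv x := by
    ext
    simp

lemma decomposeFin_zero_eq_extendDomain {n : ℕ} (e : Perm (Fin n)) :
    Equiv.Perm.decomposeFin.symm (0, e) = e.extendDomain (finSuccNeZeroEquiv n) := by
  ext x
  refine Fin.cases ?_ (fun i => ?_) x
  · rw [Equiv.Perm.decomposeFin_symm_apply_zero,
      Equiv.Perm.extendDomain_apply_not_subtype]
    simp
  · rw [Equiv.Perm.decomposeFin_symm_apply_succ]
    have : (i.succ : Fin (n + 1)) = ((finSuccNeZeroEquiv n) i : Fin (n+1)) := rfl
    rw [this]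
    rw [show ((finSuccNeZeroEquiv n) i : Fin (n+1)) = ((finSuccNeZeroEquiv n) i : {x : Fin (n+1) // x ≠ 0}) from rfl]
    rw [Equiv.Perm.extendDomain_apply_image]
    simp [finSuccNeZeroEquiv]

lemma cycleType_decomposeFin_zero {n : ℕ} (e : Perm (Fin n)) :
    (Equiv.Perm.decomposeFin.symm (0, e)).cycleType = e.cycleType := by
  rw [decomposeFin_zero_eq_extendDomain, Equiv.Perm.cycleType_extendDomain]

lemma decomposeFin_eq_swap_mul {n : ℕ} (p : Fin (n + 1)) (e : Perm (Fin n)) :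
    Equiv.Perm.decomposeFin.symm (p, e)
      = Equiv.swap 0 p * Equiv.Perm.decomposeFin.symm (0, e) := by
  ext x
  refine Fin.cases ?_ (fun i => ?_) x
  · simp [Equiv.Perm.decomposeFin_symm_apply_zero]
  · simp [Equiv.Perm.decomposeFin_symm_apply_succ]

lemma cycleType_sum_le {n : ℕ} (e : Perm (Fin n)) : e.cycleType.sum ≤ n := by
  rw [Equiv.Perm.sum_cycleType]
  simpa using Finset.card_le_univ e.support

lemma numOrbits_decomposeFin_zero {n : ℕ} (e : Perm (Fin n)) :
    numOrbits (Equiv.Perm.decomposeFin.symm (0, e)) = numOrbits e + 1 := by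
  unfold numOrbits
  rw [cycleType_decomposeFin_zero]
  have := cycleType_sum_le e
  omega

lemma numOrbits_decomposeFin_succ {n : ℕ} (e : Perm (Fin n)) (i : Fin n) :
    numOrbits (Equiv.Perm.decomposeFin.symm (i.succ, e)) = numOrbits e := by
  have h0 : (Equiv.Perm.decomposeFin.symm (0, e)) 0 = 0 :=
    Equiv.Perm.decomposeFin_symm_apply_zero 0 e
  have hkey := key (Equiv.Perm.decomposeFin.symm (0, e))
    (a := i.succ) (b := 0) (Fin.succ_ne_zero i) h0
  rw [← Equiv.swap_comm, ← decomposeFin_eq_swap_mul] at hkey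
  have h1 := numOrbits_decomposeFin_zero e
  unfold numOrbits at *
  have h2 := cycleType_sum_le (Equiv.Perm.decomposeFin.symm (i.succ, e))
  have h3 := cycleType_sum_le e
  simp only [Fintype.card_fin] at hkey
  omega

lemma sum_pow_numOrbits {R : Type*} [CommRing R] (c : R) (n : ℕ) :
    ∑ σ : Perm (Fin n), c ^ numOrbits σ = ∏ k ∈ Finset.range n, (c + (k : R)) := by
  induction n with
  | zero =>
    rw [Finset.prod_range_zero]
    rw [Fintype.sum_subsingleton _ (1 : Perm (Fin 0))]
    simp [numOrbits]
  | succ n ih =>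
    rw [← Equiv.sum_comp (Equiv.Perm.decomposeFin.symm)
      (fun σ : Perm (Fin (n+1)) => c ^ numOrbits σ), Fintype.sum_prod_type,
      Fin.sum_univ_succ]
    simp only [numOrbits_decomposeFin_zero, numOrbits_decomposeFin_succ]
    rw [Finset.prod_range_succ, ← ih]
    rw [Finset.sum_const, Finset.card_univ, Fintype.card_fin]
    simp only [pow_succ]
    rw [← Finset.sum_mul]
    push_cast
    ring

end Combinatorics

section Series

open PowerSeries Finset

variable {R : Type*} [CommRing R] [Algebra ℚ R] (c : R)


lemma coeff_exp_q (k : ℕ) : PowerSeries.coeff k (PowerSeries.exp ℚ) = (k.factorial : ℚ)⁻¹ := by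
  rw [PowerSeries.coeff_exp]
  simp [one_div]

lemma coeff_expSubst (S : PowerSeries R) (n : ℕ) :
    PowerSeries.coeff n (expSubst S) =
      ∑ k ∈ Finset.range (n + 1), (k.factorial : ℚ)⁻¹ • PowerSeries.coeff n (S ^ k) := by
  rw [expSubst, PowerSeries.coeff_mk]
  exact Finset.sum_congr rfl fun k _ => by rw [coeff_exp_q]

def Sc (c : R) : PowerSeries R :=
  PowerSeries.mk fun r => if r = 0 then 0 else ((r : ℚ)⁻¹) • c

lemma derivative_Sc : d⁄dX R (Sc c) = PowerSeries.mk fun _ => c := by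
  ext m
  rw [PowerSeries.coeff_derivative, PowerSeries.coeff_mk, Sc, PowerSeries.coeff_mk]
  rw [if_neg (Nat.succ_ne_zero m)]
  rw [smul_mul_assoc]
  have h1 : c * ((m : R) + 1) = (((m + 1 : ℕ) : ℚ)) • c := by
    rw [Algebra.smul_def, map_natCast]
    push_cast
    ring
  rw [h1, smul_smul]
  rw [inv_mul_cancel₀ (by exact_mod_cast Nat.succ_ne_zero m)]
  · simp

lemma X_dvd_Sc : (PowerSeries.X : PowerSeries R) ∣ Sc c := by
  rw [PowerSeries.X_dvd_iff]
  rw [Sc]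
  simp [PowerSeries.constantCoeff_mk]

lemma vanish (f : PowerSeries R) {k m : ℕ} (h : m < k) :
    PowerSeries.coeff m (Sc c ^ k * f) = 0 := by
  have hdvd : (PowerSeries.X : PowerSeries R) ^ k ∣ Sc c ^ k * f :=
    (pow_dvd_pow_of_dvd (X_dvd_Sc c) k).trans (dvd_mul_right _ _)
  exact (PowerSeries.X_pow_dvd_iff.mp hdvd) m h

lemma step2 (n : ℕ) :
    ((n + 1 : ℕ) : ℚ) • PowerSeries.coeff (n + 1) (expSubst (Sc c)) =
      ∑ j ∈ Finset.range (n + 1),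
        (j.factorial : ℚ)⁻¹ •
          PowerSeries.coeff n (Sc c ^ j * PowerSeries.mk fun _ => c) := by
  rw [coeff_expSubst, Finset.smul_sum, Finset.sum_range_succ']
  have h0 : ((n + 1 : ℕ) : ℚ) • ((Nat.factorial 0 : ℚ)⁻¹ •
      PowerSeries.coeff (n + 1) (Sc c ^ 0)) = 0 := by
    simp [PowerSeries.coeff_one]
  rw [h0, add_zero]
  refine Finset.sum_congr rfl fun j _ => ?_
  have hder : PowerSeries.coeff n (d⁄dX R (Sc c ^ (j + 1))) =
      PowerSeries.coeff (n + 1) (Sc c ^ (j + 1)) * ((n : R) + 1) :=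
    PowerSeries.coeff_derivative _ n
  have hlp : d⁄dX R (Sc c ^ (j + 1)) = (j + 1 : ℕ) • (Sc c ^ j * d⁄dX R (Sc c)) := by
    rw [Derivation.leibniz_pow]
    simp [smul_eq_mul]
  have key : PowerSeries.coeff (n + 1) (Sc c ^ (j + 1)) * ((n : R) + 1)
      = (j + 1 : ℕ) • PowerSeries.coeff n (Sc c ^ j * PowerSeries.mk fun _ => c) := by
    rw [← hder, hlp, map_nsmul, derivative_Sc]
  calc ((n + 1 : ℕ) : ℚ) • (((j + 1).factorial : ℚ)⁻¹ •
        PowerSeries.coeff (n + 1) (Sc c ^ (j + 1)))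
      = (((j + 1).factorial : ℚ)⁻¹) •
          (((n + 1 : ℕ) : ℚ) • PowerSeries.coeff (n + 1) (Sc c ^ (j + 1))) := by
        rw [smul_comm]
    _ = (((j + 1).factorial : ℚ)⁻¹) •
          (PowerSeries.coeff (n + 1) (Sc c ^ (j + 1)) * ((n : R) + 1)) := by
        congr 1
        rw [Algebra.smul_def, map_natCast]
        push_cast
        ring
    _ = (((j + 1).factorial : ℚ)⁻¹) •
          ((j + 1 : ℕ) • PowerSeries.coeff n (Sc c ^ j * PowerSeries.mk fun _ => c)) := by
        rw [key]
    _ = (j.factorial : ℚ)⁻¹ •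
          PowerSeries.coeff n (Sc c ^ j * PowerSeries.mk fun _ => c) := by
        rw [← Nat.cast_smul_eq_nsmul ℚ, smul_smul]
        congr 1
        rw [Nat.factorial_succ]
        push_cast
        rw [mul_inv, mul_comm ((j:ℚ)+1)⁻¹, mul_assoc,
          inv_mul_cancel₀ (by positivity), mul_one]

lemma mk_c_eq : (PowerSeries.mk fun _ => c) =
    PowerSeries.C c + PowerSeries.X * PowerSeries.mk fun _ => c := by
  ext m
  cases m with
  | zero => simp
  | succ m => simp [PowerSeries.coeff_succ_X_mul, PowerSeries.coeff_C]

lemma hsplit (j n : ℕ) :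
    PowerSeries.coeff (n + 1) (Sc c ^ j * PowerSeries.mk fun _ => c)
      = c * PowerSeries.coeff (n + 1) (Sc c ^ j)
        + PowerSeries.coeff n (Sc c ^ j * PowerSeries.mk fun _ => c) := by
  conv_lhs => rw [mk_c_eq]
  rw [mul_add, map_add]
  congr 1
  · rw [mul_comm (Sc c ^ j), PowerSeries.coeff_C_mul]
  · rw [show Sc c ^ j * (PowerSeries.X * PowerSeries.mk fun _ => c)
      = PowerSeries.X * (Sc c ^ j * PowerSeries.mk fun _ => c) by ring]
    rw [PowerSeries.coeff_succ_X_mul]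

lemma b_zero : PowerSeries.coeff 0 (expSubst (Sc c)) = 1 := by
  rw [coeff_expSubst]
  simp

lemma b_rec (n : ℕ) :
    ((n + 1 : ℕ) : ℚ) • PowerSeries.coeff (n + 1) (expSubst (Sc c)) =
      c * PowerSeries.coeff n (expSubst (Sc c))
        + ((n : ℕ) : ℚ) • PowerSeries.coeff n (expSubst (Sc c)) := by
  cases n with
  | zero =>
    rw [step2]
    simp only [Finset.sum_range_one, Nat.factorial_zero, Nat.cast_one, inv_one, one_smul,
      pow_zero, one_mul, Nat.cast_zero, zero_smul, add_zero]
    rw [b_zero, mul_one]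
    simp [PowerSeries.coeff_mk]
  | succ m =>
    rw [step2]
    have hsum : ∑ j ∈ Finset.range (m + 2),
        (j.factorial : ℚ)⁻¹ •
          PowerSeries.coeff (m + 1) (Sc c ^ j * PowerSeries.mk fun _ => c)
        = (∑ j ∈ Finset.range (m + 2),
            (j.factorial : ℚ)⁻¹ • (c * PowerSeries.coeff (m + 1) (Sc c ^ j)))
          + ∑ j ∈ Finset.range (m + 2),
            (j.factorial : ℚ)⁻¹ •
              PowerSeries.coeff m (Sc c ^ j * PowerSeries.mk fun _ => c) := by
      rw [← Finset.sum_add_distrib]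
      refine Finset.sum_congr rfl fun j _ => ?_
      rw [hsplit, smul_add]
    rw [hsum]
    congr 1
    · rw [coeff_expSubst, Finset.mul_sum]
      exact Finset.sum_congr rfl fun j _ => (mul_smul_comm _ _ _).symm
    · rw [Finset.sum_range_succ, vanish c _ (Nat.lt_succ_self m), smul_zero, add_zero]
      rw [← step2]

lemma a_rec (n : ℕ) :
    ((n + 1 : ℕ) : ℚ) •
        (((n+1).factorial : ℚ)⁻¹ • ∏ k ∈ Finset.range (n+1), (c + (k : R))) =
      c * ((n.factorial : ℚ)⁻¹ • ∏ k ∈ Finset.range n, (c + (k : R)))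
        + ((n : ℕ) : ℚ) • ((n.factorial : ℚ)⁻¹ • ∏ k ∈ Finset.range n, (c + (k : R))) := by
  rw [Finset.prod_range_succ, smul_smul]
  have hq : ((n + 1 : ℕ) : ℚ) * (((n+1).factorial : ℚ))⁻¹ = ((n.factorial : ℚ))⁻¹ := by
    rw [Nat.factorial_succ]
    push_cast
    rw [mul_inv, ← mul_assoc, mul_inv_cancel₀ (by positivity), one_mul]
  rw [hq]
  rw [mul_smul_comm, smul_comm ((n:ℕ):ℚ) _ , ← smul_add]
  congr 1
  have : ((n : ℕ) : ℚ) • ∏ k ∈ Finset.range n, (c + (k : R))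
      = (n : R) * ∏ k ∈ Finset.range n, (c + (k : R)) := by
    rw [Algebra.smul_def, map_natCast]
  rw [this]
  ring


lemma coeff_expSubst_Sc (n : ℕ) :
    PowerSeries.coeff n (expSubst (Sc c)) =
      (n.factorial : ℚ)⁻¹ • ∏ k ∈ Finset.range n, (c + (k : R)) := by
  induction n with
  | zero => rw [b_zero]; simp
  | succ n ih =>
    have h1 := b_rec c n
    rw [ih] at h1
    have h3 : ((n + 1 : ℕ) : ℚ) • PowerSeries.coeff (n + 1) (expSubst (Sc c))
        = ((n + 1 : ℕ) : ℚ) •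
          (((n+1).factorial : ℚ)⁻¹ • ∏ k ∈ Finset.range (n+1), (c + (k : R))) :=
      h1.trans (a_rec c n).symm
    have hne : ((n + 1 : ℕ) : ℚ) ≠ 0 := by positivity
    have h4 := congrArg (fun x => (((n + 1 : ℕ) : ℚ))⁻¹ • x) h3
    simpa only [smul_smul, ← mul_assoc, inv_mul_cancel₀ hne, one_smul, one_mul] using h4

end Series

/-- Generating function for Euler characteristics of symmetric products, algebraic
form: for `c` in a commutative `ℚ`-algebra, `(1/n!) ∑_{σ ∈ Sₙ} c^{#orbits(σ)}` is the
`n`-th coefficient of `(1 − t)^{−c}`, namely `c(c+1)⋯(c+n−1)/n!`; equivalently,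
`∑ₙ tⁿ (1/n!) ∑_{σ ∈ Sₙ} c^{#orbits(σ)} = exp (∑_{r ≥ 1} (c/r) tʳ)`. -/
theorem eulerChar_symmetricProduct_generatingFunction
    (R : Type*) [CommRing R] [Algebra ℚ R] (c : R) :
    (∀ n : ℕ,
      (↑n.factorial : ℚ)⁻¹ • ∑ σ : Equiv.Perm (Fin n), c ^ numOrbits σ =
        (↑n.factorial : ℚ)⁻¹ • ∏ k ∈ Finset.range n, (c + (k : R))) ∧
    (PowerSeries.mk fun n =>
        (↑n.factorial : ℚ)⁻¹ • ∑ σ : Equiv.Perm (Fin n), c ^ numOrbits σ) =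
      expSubst (PowerSeries.mk fun r =>
        if r = 0 then 0 else ((r : ℚ)⁻¹) • c) := by
  constructor
  · intro n
    rw [sum_pow_numOrbits]
  · ext n
    rw [PowerSeries.coeff_mk, sum_pow_numOrbits]
    exact (coeff_expSubst_Sc c n).symm
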